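/- With Q = [[0, 2Q₀],[0,0]] on H₁ ⊕ H₂ where Q₀ = Diag(c₁, c₂, …), 0 < cₙ < 1, the tameness inequality Re⟨Q conj z, z⟩ < ‖z‖² holds for every z ≠ 0, while ‖Q‖ = 2 if cₙ → 1. -/

import Mathlib

open scoped ComplexInnerProductSpace

/-- `ℓ²(ℕ, ℂ)`, one copy of the separable Hilbert space. -/
noncomputable abbrev Stmt13.E : Type := lp (fun _ : ℕ => ℂ) 2

/-- `H = H₁ ⊕ H₂`, the Hilbert direct sum of two copies of `ℓ²(ℕ, ℂ)`. -/
noncomputable abbrev Stmt13.H : Type := WithLp 2 (Stmt13.E × Stmt13.E)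

lemma Stmt13.sq_sum (f : Stmt13.E) : ‖f‖^2 = ∑' n, ‖f n‖^2 := by
  rw [@norm_sq_eq_re_inner ℂ, lp.inner_eq_tsum, RCLike.re_tsum ℂ (lp.summable_inner f f)]
  congr 1; ext n
  simp [← norm_sq_eq_re_inner]
  rw [← Complex.ofReal_pow, Complex.ofReal_re, Complex.sq_norm, Complex.normSq_apply]

lemma Stmt13.summ (f : Stmt13.E) : Summable (fun n => ‖f n‖^2) := by
  have := lp.memℓp f
  rw [memℓp_gen_iff (p := 2) (by norm_num)] at this
  have h2 : ((2:ENNReal)).toReal = 2 := by norm_num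
  rw [h2] at this
  simpa [Real.rpow_natCast] using this

lemma Stmt13.nsq (x : Stmt13.H) : ‖x‖ ^ 2 = ‖x.ofLp.1‖ ^ 2 + ‖x.ofLp.2‖ ^ 2 :=
  WithLp.prod_norm_sq_eq_of_L2 x

set_option maxHeartbeats 1000000

/-- With `Q = [[0, 2Q₀],[0,0]]` on `H₁ ⊕ H₂`, where
`Q₀ = Diag(c₁,c₂,…)` and `0 < cₙ < 1`, the tameness inequality
`Re⟨Q (conj z), z⟩ < ‖z‖²` holds for every `z ≠ 0`, while `‖Q‖ = 2` if `cₙ → 1`.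
Here `conj` is the coordinatewise conjugation `σ`. -/
theorem stmt13 (c : ℕ → ℝ) (hc0 : ∀ n, 0 < c n) (hc1 : ∀ n, c n < 1)
    (Q : Stmt13.H →L[ℂ] Stmt13.H)
    (hQ : ∀ z : Stmt13.H, (∀ n, (Q z).ofLp.1 n = 2 * (c n : ℂ) * z.ofLp.2 n) ∧ (Q z).ofLp.2 = 0)
    (σ : Stmt13.H →L[ℝ] Stmt13.H)
    (hσ : ∀ z : Stmt13.H, (∀ n, (σ z).ofLp.1 n = (starRingEnd ℂ) (z.ofLp.1 n)) ∧
          (∀ n, (σ z).ofLp.2 n = (starRingEnd ℂ) (z.ofLp.2 n))) :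
    (∀ z : Stmt13.H, z ≠ 0 → (⟪Q (σ z), z⟫).re < ‖z‖ ^ 2) ∧
    (Filter.Tendsto c Filter.atTop (nhds 1) → ‖Q‖ = 2) := by
  constructor
  · intro z hz
    obtain ⟨hQ1, hQ2⟩ := hQ (σ z)
    obtain ⟨hσ1, hσ2⟩ := hσ z
    have key : ∀ n : ℕ, (inner ℂ ((Q (σ z)).ofLp.1 n) (z.ofLp.1 n) : ℂ).re
        = 2 * c n * ((z.ofLp.2 : ∀ _, ℂ) n * z.ofLp.1 n).re := by
      intro n
      rw [RCLike.inner_apply, hQ1, hσ2]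
      simp [Complex.mul_re, Complex.mul_im]
      ring
    have hre : (⟪Q (σ z), z⟫).re = ∑' n, 2 * c n * ((z.ofLp.2 : ∀ _, ℂ) n * z.ofLp.1 n).re := by
      rw [WithLp.prod_inner_apply, hQ2, inner_zero_left, add_zero, lp.inner_eq_tsum,
        Complex.re_tsum (lp.summable_inner _ _)]
      exact tsum_congr key
    have hsf : Summable (fun n => 2 * c n * ((z.ofLp.2 : ∀ _, ℂ) n * z.ofLp.1 n).re) := by
      have := (lp.summable_inner (𝕜 := ℂ) (Q (σ z)).ofLp.1 z.ofLp.1).map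
        Complex.reAddGroupHom Complex.continuous_re
      exact this.congr key
    have hsg : Summable (fun n => ‖(z.ofLp.1 : ∀ _, ℂ) n‖^2 + ‖(z.ofLp.2 : ∀ _, ℂ) n‖^2) :=
      (Stmt13.summ z.ofLp.1).add (Stmt13.summ z.ofLp.2)
    have hnorm : ‖z‖^2 = ∑' n, (‖(z.ofLp.1 : ∀ _, ℂ) n‖^2 + ‖(z.ofLp.2 : ∀ _, ℂ) n‖^2) := by
      rw [Stmt13.nsq, Stmt13.sq_sum z.ofLp.1, Stmt13.sq_sum z.ofLp.2,
        Summable.tsum_add (Stmt13.summ z.ofLp.1) (Stmt13.summ z.ofLp.2)]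
    have hle : ∀ n, 2 * c n * ((z.ofLp.2 : ∀ _, ℂ) n * z.ofLp.1 n).re
        ≤ ‖(z.ofLp.1 : ∀ _, ℂ) n‖^2 + ‖(z.ofLp.2 : ∀ _, ℂ) n‖^2 := by
      intro n
      have h1 : ((z.ofLp.2 : ∀ _, ℂ) n * z.ofLp.1 n).re ≤ ‖(z.ofLp.2 : ∀ _, ℂ) n‖ * ‖(z.ofLp.1 : ∀ _, ℂ) n‖ := by
        calc ((z.ofLp.2 : ∀ _, ℂ) n * z.ofLp.1 n).re ≤ ‖(z.ofLp.2 : ∀ _, ℂ) n * z.ofLp.1 n‖ :=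
              Complex.re_le_norm _
          _ = ‖(z.ofLp.2 : ∀ _, ℂ) n‖ * ‖(z.ofLp.1 : ∀ _, ℂ) n‖ := by
              rw [norm_mul]
      nlinarith [sq_nonneg (‖(z.ofLp.1 : ∀ _, ℂ) n‖ - ‖(z.ofLp.2 : ∀ _, ℂ) n‖), (hc0 n).le, (hc1 n).le,
        norm_nonneg ((z.ofLp.1 : ∀ _, ℂ) n), norm_nonneg ((z.ofLp.2 : ∀ _, ℂ) n),
        mul_nonneg (mul_nonneg (by linarith [(hc0 n).le] : (0:ℝ) ≤ 2 * c n)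
          (norm_nonneg ((z.ofLp.2 : ∀ _, ℂ) n))) (norm_nonneg ((z.ofLp.1 : ∀ _, ℂ) n))]
    obtain ⟨n0, hn0⟩ : ∃ n, (z.ofLp.1 : ∀ _, ℂ) n ≠ 0 ∨ (z.ofLp.2 : ∀ _, ℂ) n ≠ 0 := by
      by_contra h
      push_neg at h
      apply hz
      have h1 : z.ofLp.1 = 0 := lp.ext (funext fun n => by simpa using (h n).1)
      have h2 : z.ofLp.2 = 0 := lp.ext (funext fun n => by simpa using (h n).2)
      exact WithLp.ofLp_injective 2 (Prod.ext h1 h2 : z.ofLp = (0 : Stmt13.H).ofLp)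
    have hlt : 2 * c n0 * ((z.ofLp.2 : ∀ _, ℂ) n0 * z.ofLp.1 n0).re
        < ‖(z.ofLp.1 : ∀ _, ℂ) n0‖^2 + ‖(z.ofLp.2 : ∀ _, ℂ) n0‖^2 := by
      have h1 : ((z.ofLp.2 : ∀ _, ℂ) n0 * z.ofLp.1 n0).re ≤ ‖(z.ofLp.2 : ∀ _, ℂ) n0‖ * ‖(z.ofLp.1 : ∀ _, ℂ) n0‖ := by
        calc ((z.ofLp.2 : ∀ _, ℂ) n0 * z.ofLp.1 n0).re ≤ ‖(z.ofLp.2 : ∀ _, ℂ) n0 * z.ofLp.1 n0‖ :=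
              Complex.re_le_norm _
          _ = ‖(z.ofLp.2 : ∀ _, ℂ) n0‖ * ‖(z.ofLp.1 : ∀ _, ℂ) n0‖ := by rw [norm_mul]
      have hpos : 0 < ‖(z.ofLp.1 : ∀ _, ℂ) n0‖^2 + ‖(z.ofLp.2 : ∀ _, ℂ) n0‖^2 := by
        rcases hn0 with h | h
        · have : 0 < ‖(z.ofLp.1 : ∀ _, ℂ) n0‖ := norm_pos_iff.mpr h
          nlinarith [sq_nonneg ‖(z.ofLp.2 : ∀ _, ℂ) n0‖]
        · have : 0 < ‖(z.ofLp.2 : ∀ _, ℂ) n0‖ := norm_pos_iff.mpr h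
          nlinarith [sq_nonneg ‖(z.ofLp.1 : ∀ _, ℂ) n0‖]
      nlinarith [sq_nonneg (‖(z.ofLp.1 : ∀ _, ℂ) n0‖ - ‖(z.ofLp.2 : ∀ _, ℂ) n0‖), hc0 n0, hc1 n0,
        norm_nonneg ((z.ofLp.1 : ∀ _, ℂ) n0), norm_nonneg ((z.ofLp.2 : ∀ _, ℂ) n0),
        mul_nonneg (mul_nonneg (by linarith [(hc0 n0).le] : (0:ℝ) ≤ 2 * c n0)
          (norm_nonneg ((z.ofLp.2 : ∀ _, ℂ) n0))) (norm_nonneg ((z.ofLp.1 : ∀ _, ℂ) n0))]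
    rw [hre, hnorm]
    exact Summable.tsum_lt_tsum hle hlt hsf hsg
  · intro hc
    have hub : ‖Q‖ ≤ 2 := by
      apply ContinuousLinearMap.opNorm_le_bound _ (by norm_num)
      intro z
      obtain ⟨hQ1, hQ2⟩ := hQ z
      have h1 : ‖Q z‖^2 ≤ (2*‖z‖)^2 := by
        rw [Stmt13.nsq, hQ2, Stmt13.sq_sum]
        have hle : ∑' n, ‖((Q z).ofLp.1 : ∀ _, ℂ) n‖^2 ≤ ∑' n, 4*‖(z.ofLp.2 : ∀ _, ℂ) n‖^2 := by
          apply Summable.tsum_le_tsum _ (Stmt13.summ (Q z).ofLp.1) ((Stmt13.summ z.ofLp.2).mul_left 4)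
          intro n
          rw [hQ1]
          have h2 : ‖2*(c n:ℂ)*(z.ofLp.2 : ∀ _, ℂ) n‖ = 2 * c n * ‖(z.ofLp.2 : ∀ _, ℂ) n‖ := by
            rw [norm_mul, norm_mul]
            simp [Complex.norm_real, abs_of_pos (hc0 n)]
          rw [h2]
          have hcsq : c n ^ 2 ≤ 1 := by nlinarith [hc0 n, hc1 n]
          nlinarith [mul_nonneg (sub_nonneg.mpr hcsq) (sq_nonneg ‖(z.ofLp.2 : ∀ _, ℂ) n‖)]
        have heq : ∑' n, 4*‖(z.ofLp.2 : ∀ _, ℂ) n‖^2 = 4*‖z.ofLp.2‖^2 := by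
          rw [tsum_mul_left, Stmt13.sq_sum]
        have hz2 : ‖z.ofLp.2‖^2 ≤ ‖z‖^2 := by
          rw [Stmt13.nsq]; nlinarith [sq_nonneg ‖z.ofLp.1‖]
        simp only [norm_zero]
        nlinarith
      have := le_of_pow_le_pow_left₀ two_ne_zero
        (by positivity : (0:ℝ) ≤ 2*‖z‖) h1
      linarith
    have hlb : 2 ≤ ‖Q‖ := by
      have key : ∀ n, 2 * c n ≤ ‖Q‖ := by
        intro n
        set z : Stmt13.H := (WithLp.equiv 2 (Stmt13.E × Stmt13.E)).symm (0, lp.single (E := fun _ : ℕ => ℂ) 2 n (1:ℂ)) with hzdef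
        obtain ⟨hQ1, hQ2⟩ := hQ z
        have hz1 : z.ofLp.1 = 0 := rfl
        have hz2 : z.ofLp.2 = lp.single (E := fun _ : ℕ => ℂ) 2 n (1:ℂ) := rfl
        have hnz : ‖z‖ = 1 := by
          have hsq := Stmt13.nsq z
          have hs : ‖lp.single (E := fun _ : ℕ => ℂ) 2 n (1:ℂ)‖ = 1 := by
            have := lp.norm_single (p := 2) (E := fun _ : ℕ => ℂ) (by norm_num)
              n (1:ℂ)
            simpa using this
          rw [hz1, hz2, hs] at hsq
          simp at hsq
          rcases hsq with h | h
          · exact h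
          · linarith [norm_nonneg z]
        have h1 : (2 * c n : ℝ) = ‖((Q z).ofLp.1 : ∀ _, ℂ) n‖ := by
          rw [hQ1, hz2]
          rw [lp.single_apply_self]
          rw [norm_mul, norm_mul]
          simp [abs_of_pos (hc0 n)]
        have h2 : ‖((Q z).ofLp.1 : ∀ _, ℂ) n‖ ≤ ‖(Q z).ofLp.1‖ :=
          lp.norm_apply_le_norm (by norm_num) _ n
        have h3 : ‖(Q z).ofLp.1‖ ≤ ‖Q z‖ := by
          have hsq := Stmt13.nsq (Q z)
          have := norm_nonneg (Q z)
          have := norm_nonneg (Q z).ofLp.1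
          nlinarith [sq_nonneg ‖(Q z).ofLp.2‖]
        have h4 : ‖Q z‖ ≤ ‖Q‖ := by
          have := Q.le_opNorm z
          rwa [hnz, mul_one] at this
        linarith
      have hlim : Filter.Tendsto (fun n => 2 * c n) Filter.atTop (nhds 2) := by
        have := hc.const_mul 2
        simpa using this
      exact le_of_tendsto hlim (Filter.Eventually.of_forall key)
    linarith
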